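/- If f : R^p → R is differentiable with G-Lipschitz gradient, then for every μ > 0 and every x ∈ R^p, the gradient of the Gaussian smoothing satisfies ||∇f_μ(x) − ∇f(x)|| ≤ μ G √p. -/

import Mathlib

open MeasureTheory ProbabilityTheory

/-- The standard Gaussian measure `N(0, I_p)` on `ℝ^p`. -/
noncomputable def stdGaussian (p : ℕ) : Measure (EuclideanSpace ℝ (Fin p)) :=
  Measure.map (MeasurableEquiv.toLp 2 (Fin p → ℝ)) (Measure.pi fun _ => gaussianReal 0 1)

section SGAux
open Real Filter Metric InnerProductSpace
open scoped ENNReal NNReal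

lemma sg_tendsto_mul_exp : Tendsto (fun x : ℝ => x * exp (-(2⁻¹:ℝ) * x ^ 2)) atTop (nhds 0) := by
  have h := rpow_mul_exp_neg_mul_sq_isLittleO_exp_neg (b := (2⁻¹:ℝ)) (by norm_num) 1
  have h2 : Tendsto (fun x : ℝ => exp (-(1/2) * x)) atTop (nhds 0) := by
    apply Real.tendsto_exp_atBot.comp
    exact (tendsto_id.const_mul_atTop_of_neg (by norm_num))
  have h3 := h.trans_tendsto h2
  refine h3.congr' ?_
  filter_upwards [eventually_gt_atTop (0:ℝ)] with x hx
  rw [Real.rpow_one]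


lemma sg_integrable_sq_exp : Integrable (fun x : ℝ => x ^ 2 * exp (-(2⁻¹:ℝ) * x ^ 2)) := by
  have := integrable_rpow_mul_exp_neg_mul_sq (b := (2⁻¹:ℝ)) (by norm_num) (s := 2) (by norm_num)
  simpa [Real.rpow_two] using this


lemma sg_integral_sq_exp : ∫ x : ℝ, x ^ 2 * exp (-(2⁻¹:ℝ) * x ^ 2) = Real.sqrt (2 * π) := by
  have hderiv : ∀ x : ℝ, HasDerivAt (fun y : ℝ => -y * exp (-(2⁻¹:ℝ) * y ^ 2))
      (x ^ 2 * exp (-(2⁻¹:ℝ) * x ^ 2) - exp (-(2⁻¹:ℝ) * x ^ 2)) x := by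
    intro x
    have h1 : HasDerivAt (fun y : ℝ => -(2⁻¹:ℝ) * y ^ 2) (-(2⁻¹:ℝ) * (2 * x)) x := by
      simpa using ((hasDerivAt_pow 2 x).const_mul (-(2⁻¹:ℝ)))
    have h2 : HasDerivAt (fun y : ℝ => exp (-(2⁻¹:ℝ) * y ^ 2))
        (exp (-(2⁻¹:ℝ) * x ^ 2) * (-(2⁻¹:ℝ) * (2 * x))) x := h1.exp
    have h3 := ((hasDerivAt_id x).neg).mul h2
    exact h3.congr_deriv (by simp [id]; ring)
  have hint : Integrable (fun x : ℝ =>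
      x ^ 2 * exp (-(2⁻¹:ℝ) * x ^ 2) - exp (-(2⁻¹:ℝ) * x ^ 2)) :=
    sg_integrable_sq_exp.sub (integrable_exp_neg_mul_sq (by norm_num))
  have htop : Tendsto (fun x : ℝ => -x * exp (-(2⁻¹:ℝ) * x ^ 2)) atTop (nhds 0) := by
    simpa using sg_tendsto_mul_exp.neg
  have hbot : Tendsto (fun x : ℝ => -x * exp (-(2⁻¹:ℝ) * x ^ 2)) atBot (nhds 0) := by
    have := sg_tendsto_mul_exp.comp tendsto_neg_atBot_atTop
    simpa [Function.comp_def, mul_comm] using this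
  have key := integral_of_hasDerivAt_of_tendsto hderiv hint hbot htop
  rw [sub_zero] at key
  have hsplit := integral_sub sg_integrable_sq_exp (integrable_exp_neg_mul_sq (show (0:ℝ) < 2⁻¹ by norm_num))
  rw [hsplit] at key
  have hg : ∫ x : ℝ, exp (-(2⁻¹:ℝ) * x ^ 2) = Real.sqrt (2 * π) := by
    rw [integral_gaussian]
    norm_num [div_eq_mul_inv, mul_comm]
  linarith [key, hg]

lemma sg_gaussian_pdf_eq (x : ℝ) :
    gaussianPDFReal 0 1 x = (Real.sqrt (2 * π))⁻¹ * exp (-(2⁻¹:ℝ) * x ^ 2) := by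
  simp only [gaussianPDFReal, NNReal.coe_one, mul_one, sub_zero]
  ring_nf

lemma sg_gr_eq : gaussianReal 0 1 =
    volume.withDensity (fun x => ((gaussianPDFReal 0 1 x).toNNReal : ℝ≥0∞)) := by
  rw [gaussianReal_of_var_ne_zero 0 one_ne_zero]
  rfl

lemma sg_integrable_sq_gaussian : Integrable (fun x : ℝ => x ^ 2) (gaussianReal 0 1) := by
  rw [sg_gr_eq, integrable_withDensity_iff_integrable_smul
    (measurable_gaussianPDFReal 0 1).real_toNNReal]
  have : ∀ x : ℝ, ((gaussianPDFReal 0 1 x).toNNReal : ℝ≥0) • (x ^ 2)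
      = (Real.sqrt (2 * π))⁻¹ * (x ^ 2 * exp (-(2⁻¹:ℝ) * x ^ 2)) := by
    intro x
    rw [NNReal.smul_def, smul_eq_mul, Real.coe_toNNReal _ (gaussianPDFReal_nonneg 0 1 x),
      sg_gaussian_pdf_eq]
    ring
  simp_rw [this]
  exact sg_integrable_sq_exp.const_mul _

lemma sg_integral_sq_gaussian : ∫ x : ℝ, x ^ 2 ∂(gaussianReal 0 1) = 1 := by
  rw [sg_gr_eq, integral_withDensity_eq_integral_smul
    (measurable_gaussianPDFReal 0 1).real_toNNReal]
  have : ∀ x : ℝ, ((gaussianPDFReal 0 1 x).toNNReal : ℝ≥0) • (x ^ 2)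
      = (Real.sqrt (2 * π))⁻¹ * (x ^ 2 * exp (-(2⁻¹:ℝ) * x ^ 2)) := by
    intro x
    rw [NNReal.smul_def, smul_eq_mul, Real.coe_toNNReal _ (gaussianPDFReal_nonneg 0 1 x),
      sg_gaussian_pdf_eq]
    ring
  simp_rw [this]
  rw [integral_const_mul, sg_integral_sq_exp]
  rw [inv_mul_cancel₀]
  positivity

instance sg_instPM (p : ℕ) : IsProbabilityMeasure (stdGaussian p) :=
  Measure.isProbabilityMeasure_map (MeasurableEquiv.toLp 2 (Fin p → ℝ)).measurable.aemeasurable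

lemma sg_map_eval (p : ℕ) (i : Fin p) :
    (stdGaussian p).map (fun u => u i) = gaussianReal 0 1 := by
  rw [_root_.stdGaussian, Measure.map_map (by fun_prop) (MeasurableEquiv.toLp 2 (Fin p → ℝ)).measurable]
  exact (measurePreserving_eval (fun _ => gaussianReal 0 1) i).map_eq

lemma sg_integrable_coord_sq (p : ℕ) (i : Fin p) :
    Integrable (fun u : EuclideanSpace ℝ (Fin p) => (u i) ^ 2) (stdGaussian p) := by
  have h := sg_integrable_sq_gaussian
  rw [← sg_map_eval p i] at h
  exact h.comp_measurable (by fun_prop)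

lemma sg_integral_coord_sq (p : ℕ) (i : Fin p) :
    ∫ u : EuclideanSpace ℝ (Fin p), (u i) ^ 2 ∂(stdGaussian p) = 1 := by
  have h := integral_map (φ := fun u : EuclideanSpace ℝ (Fin p) => u i)
    (μ := stdGaussian p) (Measurable.aemeasurable (by fun_prop))
    (f := fun x : ℝ => x ^ 2) (measurable_id.pow_const 2).aestronglyMeasurable
  rw [sg_map_eval p i, sg_integral_sq_gaussian] at h
  exact h.symm

lemma sg_normsq_eq (p : ℕ) (u : EuclideanSpace ℝ (Fin p)) : ‖u‖ ^ 2 = ∑ i, (u i) ^ 2 := by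
  rw [EuclideanSpace.norm_eq, Real.sq_sqrt]
  · simp [sq_abs]
  · positivity

lemma sg_integrable_normsq (p : ℕ) :
    Integrable (fun u : EuclideanSpace ℝ (Fin p) => ‖u‖ ^ 2) (stdGaussian p) := by
  simp_rw [sg_normsq_eq]
  exact integrable_finset_sum _ (fun i _ => sg_integrable_coord_sq p i)

lemma sg_integral_normsq (p : ℕ) :
    ∫ u, ‖u‖ ^ 2 ∂(stdGaussian p) = p := by
  simp_rw [sg_normsq_eq]
  rw [integral_finset_sum _ (fun i _ => sg_integrable_coord_sq p i)]
  simp [sg_integral_coord_sq]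

lemma sg_integrable_norm (p : ℕ) :
    Integrable (fun u : EuclideanSpace ℝ (Fin p) => ‖u‖) (stdGaussian p) := by
  refine Integrable.mono' ((integrable_const (1:ℝ)).add (sg_integrable_normsq p))
    continuous_norm.aestronglyMeasurable ?_
  filter_upwards with u
  simp only [Pi.add_apply]
  rw [Real.norm_eq_abs, abs_of_nonneg (norm_nonneg u)]
  nlinarith [norm_nonneg u, sq_nonneg (‖u‖ - 1)]

lemma sg_integral_norm_le (p : ℕ) (hp : 0 < p) :
    ∫ u, ‖u‖ ∂(stdGaussian p) ≤ Real.sqrt p := by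
  have hsp : (0:ℝ) < Real.sqrt p := Real.sqrt_pos.2 (by exact_mod_cast hp)
  have hs : Real.sqrt (p:ℝ) ^ 2 = (p:ℝ) := Real.sq_sqrt (by positivity)
  have hbound : ∀ u : EuclideanSpace ℝ (Fin p),
      ‖u‖ ≤ (2 * Real.sqrt p)⁻¹ * ((p : ℝ) + ‖u‖ ^ 2) := by
    intro u
    rw [inv_mul_eq_div, le_div_iff₀ (by positivity)]
    nlinarith [sq_nonneg (‖u‖ - Real.sqrt p)]
  calc ∫ u, ‖u‖ ∂(stdGaussian p)
      ≤ ∫ u, (2 * Real.sqrt p)⁻¹ * ((p : ℝ) + ‖u‖ ^ 2) ∂(stdGaussian p) := by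
        refine integral_mono (sg_integrable_norm p) ?_ hbound
        exact (((integrable_const _).add (sg_integrable_normsq p)).const_mul _)
    _ = Real.sqrt p := by
        rw [integral_const_mul, integral_add (integrable_const _) (sg_integrable_normsq p),
          sg_integral_normsq, integral_const]
        simp only [measure_univ, ENNReal.toReal_one, probReal_univ, smul_eq_mul, one_mul]
        field_simp
        nlinarith [hs, hsp]

section Aux
variable {p : ℕ} {f : EuclideanSpace ℝ (Fin p) → ℝ} {G : ℝ}

lemma sg_grad_eq (f : EuclideanSpace ℝ (Fin p) → ℝ) (z : EuclideanSpace ℝ (Fin p)) :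
    gradient f z = (toDual ℝ (EuclideanSpace ℝ (Fin p))).symm (fderiv ℝ f z) := rfl

lemma sg_lip_fderiv (hG : ∀ x y, ‖gradient f x - gradient f y‖ ≤ G * ‖x - y‖) :
    ∀ a b, ‖fderiv ℝ f a - fderiv ℝ f b‖ ≤ G * ‖a - b‖ := by
  intro a b
  have h := hG a b
  rwa [sg_grad_eq, sg_grad_eq, ← map_sub, LinearIsometryEquiv.norm_map] at h

lemma sg_norm_fderiv_le (hG : ∀ x y, ‖gradient f x - gradient f y‖ ≤ G * ‖x - y‖)
    (a b : EuclideanSpace ℝ (Fin p)) :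
    ‖fderiv ℝ f b‖ ≤ ‖fderiv ℝ f a‖ + G * ‖b - a‖ := by
  have h1 := sg_lip_fderiv hG b a
  have h2 := norm_sub_norm_le (fderiv ℝ f b) (fderiv ℝ f a)
  linarith

lemma sg_cont_fderiv (hG0 : 0 ≤ G)
    (hG : ∀ x y, ‖gradient f x - gradient f y‖ ≤ G * ‖x - y‖) :
    Continuous (fderiv ℝ f) := by
  refine (LipschitzWith.of_dist_le_mul (K := G.toNNReal) fun a b => ?_).continuous
  rw [dist_eq_norm, dist_eq_norm, Real.coe_toNNReal _ hG0]
  exact sg_lip_fderiv hG a b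

lemma sg_key_bound (hdiff : Differentiable ℝ f) (hG0 : 0 ≤ G)
    (hG : ∀ x y, ‖gradient f x - gradient f y‖ ≤ G * ‖x - y‖)
    (a b : EuclideanSpace ℝ (Fin p)) :
    ‖f b - f a‖ ≤ (‖fderiv ℝ f a‖ + G * ‖b - a‖) * ‖b - a‖ := by
  refine (convex_closedBall a ‖b - a‖).norm_image_sub_le_of_norm_fderiv_le
    (fun z _ => hdiff z) (fun z hz => ?_) (mem_closedBall_self (norm_nonneg _))
    (by simp [mem_closedBall, dist_eq_norm])
  rw [mem_closedBall, dist_eq_norm] at hz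
  have := sg_norm_fderiv_le hG a z
  nlinarith

end Aux

/-- If f is differentiable with G-Lipschitz gradient, then the gradient of its Gaussian smoothing satisfies the bias bound: norm of (grad f_mu x - grad f x) <= mu * G * sqrt p. -/
theorem stmt_3 (p : ℕ) (f : EuclideanSpace ℝ (Fin p) → ℝ)
    (hdiff : Differentiable ℝ f) (G : ℝ)
    (hG : ∀ x y, ‖gradient f x - gradient f y‖ ≤ G * ‖x - y‖)
    (μ : ℝ) (hμ : 0 < μ) (x : EuclideanSpace ℝ (Fin p)) :
    ‖gradient (fun y => ∫ u, f (y + μ • u) ∂(stdGaussian p)) x - gradient f x‖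
      ≤ μ * G * Real.sqrt p := by
  rcases Nat.eq_zero_or_pos p with hp | hp
  · subst hp
    have h1 : gradient (fun y => ∫ u, f (y + μ • u) ∂(stdGaussian 0)) x = gradient f x :=
      Subsingleton.elim _ _
    simp [h1]
  have hG0 : 0 ≤ G := by
    have i0 : Fin p := ⟨0, hp⟩
    have h := hG (EuclideanSpace.single i0 1) 0
    have hnorm : ‖EuclideanSpace.single i0 (1:ℝ) - 0‖ = 1 := by
      simp [EuclideanSpace.norm_single]
    rw [hnorm, mul_one] at h
    exact le_trans (norm_nonneg _) h
  have haff : Continuous fun u : EuclideanSpace ℝ (Fin p) => μ • u :=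
    continuous_id.const_smul μ
  have hcont : ∀ y : EuclideanSpace ℝ (Fin p),
      Continuous fun u : EuclideanSpace ℝ (Fin p) => f (y + μ • u) := fun y =>
    hdiff.continuous.comp (continuous_const.add haff)
  have hcontD : ∀ y : EuclideanSpace ℝ (Fin p),
      Continuous fun u : EuclideanSpace ℝ (Fin p) => fderiv ℝ f (y + μ • u) := fun y =>
    (sg_cont_fderiv hG0 hG).comp (continuous_const.add haff)
  have hμ' : ∀ (y u : EuclideanSpace ℝ (Fin p)), ‖y + μ • u - y‖ = μ * ‖u‖ := by
    intro y u
    simp [norm_smul, abs_of_pos hμ]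
  have hF_deriv : HasFDerivAt (fun y => ∫ u, f (y + μ • u) ∂(stdGaussian p))
      (∫ u, fderiv ℝ f (x + μ • u) ∂(stdGaussian p)) x := by
    apply hasFDerivAt_integral_of_dominated_of_fderiv_le
      (F' := fun y u => fderiv ℝ f (y + μ • u))
      (bound := fun u => ‖fderiv ℝ f x‖ + G * (1 + μ * ‖u‖)) (s := Metric.ball x 1) (hs := Metric.ball_mem_nhds x one_pos)
    · filter_upwards with y
      exact (hcont y).aestronglyMeasurable
    · refine Integrable.mono'
        (g := fun u => |f x| + (μ * ‖fderiv ℝ f x‖) * ‖u‖ + (G * μ ^ 2) * ‖u‖ ^ 2)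
        ?_ (hcont x).aestronglyMeasurable ?_
      · exact (((integrable_const _).add ((sg_integrable_norm p).const_mul _)).add
          ((sg_integrable_normsq p).const_mul _))
      · filter_upwards with u
        have h1 := sg_key_bound hdiff hG0 hG x (x + μ • u)
        rw [hμ'] at h1
        have h2 := norm_sub_norm_le (f (x + μ • u)) (f x)
        have h3 : ‖f (x + μ • u)‖ = |f (x + μ • u)| := rfl
        have h4 : ‖f x‖ = |f x| := rfl
        rw [Real.norm_eq_abs]
        nlinarith [abs_nonneg (f x), norm_nonneg u, norm_nonneg (fderiv ℝ f x)]
    · exact (hcontD x).aestronglyMeasurable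
    · filter_upwards with u
      intro y hy
      have h1 := sg_norm_fderiv_le hG x (y + μ • u)
      have h2 : ‖y + μ • u - x‖ ≤ 1 + μ * ‖u‖ := by
        have h3 : y + μ • u - x = (y - x) + μ • u := by abel
        rw [h3]
        refine (norm_add_le _ _).trans ?_
        rw [norm_smul, Real.norm_eq_abs, abs_of_pos hμ]
        have h4 : ‖y - x‖ ≤ 1 := by
          rw [mem_ball, dist_eq_norm] at hy; linarith
        linarith
      nlinarith
    · refine (((integrable_const (‖fderiv ℝ f x‖ + G)).add
        ((sg_integrable_norm p).const_mul (G * μ)))).congr ?_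
      filter_upwards with u
      simp only [Pi.add_apply]
      ring
    · filter_upwards with u
      intro y hy
      have h1 : HasFDerivAt (fun y : EuclideanSpace ℝ (Fin p) => y + μ • u)
          (ContinuousLinearMap.id ℝ (EuclideanSpace ℝ (Fin p))) y :=
        (hasFDerivAt_id y).add_const (μ • u)
      have h2 := ((hdiff (y + μ • u)).hasFDerivAt).comp y h1
      exact h2
  have int_D : Integrable (fun u => fderiv ℝ f (x + μ • u)) (stdGaussian p) := by
    refine Integrable.mono' (g := fun u => ‖fderiv ℝ f x‖ + (G * μ) * ‖u‖)
      ((integrable_const _).add ((sg_integrable_norm p).const_mul (G * μ)))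
      (hcontD x).aestronglyMeasurable ?_
    filter_upwards with u
    have h1 := sg_norm_fderiv_le hG x (x + μ • u)
    rw [hμ'] at h1
    linarith [h1]
  have int_grad : Integrable (fun u => gradient f (x + μ • u)) (stdGaussian p) := by
    have := ((toDual ℝ (EuclideanSpace ℝ (Fin p))).symm.toContinuousLinearEquiv.toContinuousLinearMap).integrable_comp int_D
    exact this
  have hgrad_smooth : gradient (fun y => ∫ u, f (y + μ • u) ∂(stdGaussian p)) x
      = ∫ u, gradient f (x + μ • u) ∂(stdGaussian p) := by
    rw [sg_grad_eq, hF_deriv.fderiv]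
    have hcc := ContinuousLinearMap.integral_comp_comm
      ((toDual ℝ (EuclideanSpace ℝ (Fin p))).symm.toContinuousLinearEquiv.toContinuousLinearMap) int_D
    exact hcc.symm
  rw [hgrad_smooth]
  have hconst : (∫ u, gradient f x ∂(stdGaussian p)) = gradient f x := by
    simp [integral_const]
  rw [← hconst, ← integral_sub int_grad (integrable_const _)]
  calc ‖∫ u, (gradient f (x + μ • u) - gradient f x) ∂(stdGaussian p)‖
      ≤ ∫ u, ‖gradient f (x + μ • u) - gradient f x‖ ∂(stdGaussian p) :=
        norm_integral_le_integral_norm _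
    _ ≤ ∫ u, (μ * G) * ‖u‖ ∂(stdGaussian p) := by
        refine integral_mono ((int_grad.sub (integrable_const _)).norm)
          ((sg_integrable_norm p).const_mul _) ?_
        intro u
        have h := hG (x + μ • u) x
        rw [hμ'] at h
        calc ‖gradient f (x + μ • u) - gradient f x‖ ≤ G * (μ * ‖u‖) := h
          _ = (μ * G) * ‖u‖ := by ring
    _ = (μ * G) * ∫ u, ‖u‖ ∂(stdGaussian p) := integral_const_mul _ _
    _ ≤ μ * G * Real.sqrt p := by
        have h := sg_integral_norm_le p hp
        have hμG : 0 ≤ μ * G := mul_nonneg hμ.le hG0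
        nlinarith

end SGAux
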